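/- Consider the goods instance with three agents and five goods g_1, g_2, g_3, g_4, g_5, where every agent values each of g_1, g_2, g_3, g_4 at 3 and values g_5 at 1 (identical valuations). No allocation of these five goods among the three agents is PropX. -/

import Mathlib

open scoped Classical
open Finset

noncomputable section FairDivision

variable {N I : Type*}

/-- Additive value of agent `i` for a bundle `S`. -/
def bval (v : N → I → ℝ) (i : N) (S : Finset I) : ℝ := ∑ j ∈ S, v i j

/-- `x` is an allocation of the item set `S`: the bundles are pairwise disjoint
and together cover exactly `S`. -/
def IsAllocation [Fintype N] (x : N → Finset I) (S : Finset I) : Prop :=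
  (∀ i h : N, i ≠ h → Disjoint (x i) (x h)) ∧ Finset.univ.biUnion x = S

/-- Envy-freeness up to any item (mixed manna version). -/
def EFX (v : N → I → ℝ) (x : N → Finset I) : Prop :=
  ∀ i h : N,
    (∀ g ∈ x h, 0 < v i g → bval v i (x i) ≥ bval v i ((x h).erase g)) ∨
    (∀ c ∈ x i, v i c < 0 → bval v i ((x i).erase c) ≥ bval v i (x h))

/-- The stronger notion EFX₀, where goods of zero value are also considered. -/
def EFX0 (v : N → I → ℝ) (x : N → Finset I) : Prop :=
  ∀ i h : N,
    (∀ g ∈ x h, 0 ≤ v i g → bval v i (x i) ≥ bval v i ((x h).erase g)) ∨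
    (∀ c ∈ x i, v i c < 0 → bval v i ((x i).erase c) ≥ bval v i (x h))

/-- `dpos v x i`: the maximin good value `d_i(x)`: the maximum, over agents `h ≠ i`
whose bundle contains an item valued positively by `i`, of the minimum value
(for `i`) of such an item in `x h`; `0` if no such agent exists. -/
def dpos [Fintype N] (v : N → I → ℝ) (x : N → Finset I) (i : N) : ℝ :=
  if hA : (Finset.univ.filter fun h =>
      h ≠ i ∧ ((x h).filter fun j => 0 < v i j).Nonempty).Nonempty then
    (Finset.univ.filter fun h =>
        h ≠ i ∧ ((x h).filter fun j => 0 < v i j).Nonempty).sup' hA fun h =>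
      if hB : ((x h).filter fun j => 0 < v i j).Nonempty then
        ((x h).filter fun j => 0 < v i j).inf' hB fun j => v i j
      else 0
  else 0

/-- `dnn v x i`: the variant `d⁰_i(x)` of the maximin good value where
nonnegatively-valued items are considered. -/
def dnn [Fintype N] (v : N → I → ℝ) (x : N → Finset I) (i : N) : ℝ :=
  if hA : (Finset.univ.filter fun h =>
      h ≠ i ∧ ((x h).filter fun j => 0 ≤ v i j).Nonempty).Nonempty then
    (Finset.univ.filter fun h =>
        h ≠ i ∧ ((x h).filter fun j => 0 ≤ v i j).Nonempty).sup' hA fun h =>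
      if hB : ((x h).filter fun j => 0 ≤ v i j).Nonempty then
        ((x h).filter fun j => 0 ≤ v i j).inf' hB fun j => v i j
      else 0
  else 0

/-- Proportional share of agent `i`. -/
def propShare [Fintype N] (v : N → I → ℝ) (M : Finset I) (i : N) : ℝ :=
  bval v i M / (Fintype.card N : ℝ)

/-- Proportionality up to the maximin good or any bad. -/
def PropMX [Fintype N] (v : N → I → ℝ) (M : Finset I) (x : N → Finset I) : Prop :=
  ∀ i : N,
    bval v i (x i) + dpos v x i ≥ propShare v M i ∨
    (∀ c ∈ x i, v i c < 0 → bval v i ((x i).erase c) ≥ propShare v M i)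

/-- The stronger notion PropMX₀. -/
def PropMX0 [Fintype N] (v : N → I → ℝ) (M : Finset I) (x : N → Finset I) : Prop :=
  ∀ i : N,
    bval v i (x i) + dnn v x i ≥ propShare v M i ∨
    (∀ c ∈ x i, v i c < 0 → bval v i ((x i).erase c) ≥ propShare v M i)

/-- Utilitarian social welfare. -/
def SW [Fintype N] (v : N → I → ℝ) (x : N → Finset I) : ℝ :=
  ∑ i : N, bval v i (x i)

/-- `y` Pareto-dominates `x`. -/
def ParetoDominates [Fintype N] (v : N → I → ℝ) (y x : N → Finset I) : Prop :=
  (∀ i : N, bval v i (y i) ≥ bval v i (x i)) ∧ ∃ h : N, bval v h (y h) > bval v h (x h)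

/-- `x` is Pareto-optimal among allocations of `M`. -/
def ParetoOptimal [Fintype N] (v : N → I → ℝ) (M : Finset I) (x : N → Finset I) : Prop :=
  ¬ ∃ y : N → Finset I, IsAllocation y M ∧ ParetoDominates v y x

/-- `x` maximizes the social welfare over all allocations of `M`. -/
def MaxSW [Fintype N] (v : N → I → ℝ) (M : Finset I) (x : N → Finset I) : Prop :=
  ∀ y : N → Finset I, IsAllocation y M → SW v y ≤ SW v x

/-- A set `B` of (pure bad) items is identically ordered (IDO): it can be enumerated
as `c₁, …, c_k` with `v i c₁ ≤ v i c₂ ≤ … ≤ v i c_k` for every agent `i`. -/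
def IDO (v : N → I → ℝ) (B : Finset I) : Prop :=
  ∃ l : List I, l.Nodup ∧ l.toFinset = B ∧ ∀ i : N, (l.map (v i)).Pairwise (· ≤ ·)

end FairDivision

/-- The valuations of the counterexample: three agents, five goods,
`g₁,…,g₄` valued at `3` and `g₅` valued at `1` by every agent. -/
def vPropX : Fin 3 → Fin 5 → ℝ := fun _ j => if j = (4 : Fin 5) then 1 else 3


def wZ : Fin 5 → ℤ := fun j => if j = 4 then 1 else 3

set_option maxRecDepth 10000 in
lemma key : ∀ f : Fin 5 → Fin 3,
    ∃ i : Fin 3, ∃ g ∈ Finset.univ.filter (fun j => f j ≠ i),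
      3 * ((∑ j ∈ Finset.univ.filter (fun j => f j = i), wZ j) + wZ g) < 13 := by
  decide

lemma bval_eq (i : Fin 3) (S : Finset (Fin 5)) :
    bval vPropX i S = ((∑ j ∈ S, wZ j : ℤ) : ℝ) := by
  unfold bval vPropX wZ
  push_cast
  refine Finset.sum_congr rfl fun j _ => ?_
  split <;> norm_num

/-- In the goods instance `vPropX`, no allocation of the five
goods among the three agents is PropX. -/
theorem no_propx_allocation :
    ¬ ∃ x : Fin 3 → Finset (Fin 5),
      IsAllocation x (Finset.univ : Finset (Fin 5)) ∧
      ∀ i : Fin 3, ∀ g ∈ (Finset.univ : Finset (Fin 5)) \ x i,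
        bval vPropX i (x i) + vPropX i g ≥ propShare vPropX Finset.univ i := by
  rintro ⟨x, ⟨hdisj, hcov⟩, hprop⟩
  have hcov' : ∀ j : Fin 5, ∃ i : Fin 3, j ∈ x i := by
    intro j
    have h0 : j ∈ (Finset.univ : Finset (Fin 5)) := Finset.mem_univ j
    rw [← hcov] at h0
    simpa using h0
  set f : Fin 5 → Fin 3 := fun j => (hcov' j).choose with hf
  have hfspec : ∀ j, j ∈ x (f j) := fun j => (hcov' j).choose_spec
  have hx : ∀ i : Fin 3, x i = Finset.univ.filter (fun j => f j = i) := by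
    intro i
    ext j
    simp only [Finset.mem_filter, Finset.mem_univ, true_and]
    constructor
    · intro hj
      by_contra hne
      simpa using (hdisj (f j) i hne).le_bot (Finset.mem_inter.mpr ⟨hfspec j, hj⟩)
    · intro hj; exact hj ▸ hfspec j
  obtain ⟨i, g, hg, hlt⟩ := key f
  simp only [Finset.mem_filter, Finset.mem_univ, true_and] at hg
  have hgmem : g ∈ (Finset.univ : Finset (Fin 5)) \ x i := by
    simp [hx i, hg]
  have h := hprop i g hgmem
  rw [bval_eq] at h
  have hshare : propShare vPropX (Finset.univ : Finset (Fin 5)) i = 13 / 3 := by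
    unfold propShare bval vPropX
    rw [Fin.sum_univ_five]
    norm_num [show ((0:Fin 5) = 4) ↔ False from by decide,
      show ((1:Fin 5) = 4) ↔ False from by decide,
      show ((2:Fin 5) = 4) ↔ False from by decide,
      show ((3:Fin 5) = 4) ↔ False from by decide]
  rw [hshare] at h
  have hvg : vPropX i g = ((wZ g : ℤ) : ℝ) := by
    unfold vPropX wZ; split <;> norm_num
  rw [hvg] at h
  rw [hx i] at h
  have h2 : (13 : ℝ) ≤ 3 * (((∑ j ∈ Finset.univ.filter (fun j => f j = i), wZ j : ℤ) : ℝ) + ((wZ g : ℤ) : ℝ)) := by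
    linarith
  have h3 : (13 : ℤ) ≤ 3 * ((∑ j ∈ Finset.univ.filter (fun j => f j = i), wZ j) + wZ g) := by
    exact_mod_cast h2
  omega
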